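/- The subgroup of the group of linear isometries of Euclidean ℝ³ generated by the three reflections in the hyperplanes orthogonal to r₁ = (0,1,0), r₂ = −½(τ−1, 1, τ), r₃ = (0,0,1) has order 120 (it is the full icosahedral group, the Coxeter group H₃ ≅ A₅ × ℤ₂). -/

import Mathlib

noncomputable section

open RealInnerProductSpace

/-- The golden ratio `τ = (1+√5)/2`. -/
def τ : ℝ := (1 + Real.sqrt 5) / 2

/-- The simple roots `r₁ = (0,1,0)`, `r₂ = −½(τ−1, 1, τ)`, `r₃ = (0,0,1)` of `H₃`
in Euclidean `ℝ³`. -/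
def r : Fin 3 → EuclideanSpace ℝ (Fin 3) :=
  ![!₂[0, 1, 0], !₂[-((τ - 1) / 2), -(1 / 2), -(τ / 2)], !₂[0, 0, 1]]

/-- The subgroup of the group of linear isometries of `ℝ³` generated by the three
reflections `λ ↦ λ − 2(λ|rᵢ)/(rᵢ|rᵢ)·rᵢ` in the hyperplanes orthogonal to `r₁, r₂, r₃`. -/
def IcosGroup : Subgroup (EuclideanSpace ℝ (Fin 3) ≃ₗᵢ[ℝ] EuclideanSpace ℝ (Fin 3)) :=
  Subgroup.closure
    {f | ∃ i : Fin 3, ∀ v, f v = v - (2 * ⟪v, r i⟫ / ⟪r i, r i⟫) • r i}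

namespace IcosAux

def ent : Fin 120 → Fin 3 → Fin 3 → ℤ√5 :=
  ![![![(⟨4,0⟩ : ℤ√5), (⟨0,0⟩ : ℤ√5), (⟨0,0⟩ : ℤ√5)], ![(⟨0,0⟩ : ℤ√5), (⟨4,0⟩ : ℤ√5), (⟨0,0⟩ : ℤ√5)], ![(⟨0,0⟩ : ℤ√5), (⟨0,0⟩ : ℤ√5), (⟨4,0⟩ : ℤ√5)]],
    ![![(⟨4,0⟩ : ℤ√5), (⟨0,0⟩ : ℤ√5), (⟨0,0⟩ : ℤ√5)], ![(⟨0,0⟩ : ℤ√5), (⟨-4,0⟩ : ℤ√5), (⟨0,0⟩ : ℤ√5)], ![(⟨0,0⟩ : ℤ√5), (⟨0,0⟩ : ℤ√5), (⟨4,0⟩ : ℤ√5)]],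
    ![![(⟨1,1⟩ : ℤ√5), (⟨1,-1⟩ : ℤ√5), (⟨-2,0⟩ : ℤ√5)], ![(⟨1,-1⟩ : ℤ√5), (⟨2,0⟩ : ℤ√5), (⟨-1,-1⟩ : ℤ√5)], ![(⟨-2,0⟩ : ℤ√5), (⟨-1,-1⟩ : ℤ√5), (⟨1,-1⟩ : ℤ√5)]],
    ![![(⟨4,0⟩ : ℤ√5), (⟨0,0⟩ : ℤ√5), (⟨0,0⟩ : ℤ√5)], ![(⟨0,0⟩ : ℤ√5), (⟨4,0⟩ : ℤ√5), (⟨0,0⟩ : ℤ√5)], ![(⟨0,0⟩ : ℤ√5), (⟨0,0⟩ : ℤ√5), (⟨-4,0⟩ : ℤ√5)]],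
    ![![(⟨1,1⟩ : ℤ√5), (⟨-1,1⟩ : ℤ√5), (⟨-2,0⟩ : ℤ√5)], ![(⟨1,-1⟩ : ℤ√5), (⟨-2,0⟩ : ℤ√5), (⟨-1,-1⟩ : ℤ√5)], ![(⟨-2,0⟩ : ℤ√5), (⟨1,1⟩ : ℤ√5), (⟨1,-1⟩ : ℤ√5)]],
    ![![(⟨4,0⟩ : ℤ√5), (⟨0,0⟩ : ℤ√5), (⟨0,0⟩ : ℤ√5)], ![(⟨0,0⟩ : ℤ√5), (⟨-4,0⟩ : ℤ√5), (⟨0,0⟩ : ℤ√5)], ![(⟨0,0⟩ : ℤ√5), (⟨0,0⟩ : ℤ√5), (⟨-4,0⟩ : ℤ√5)]],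
    ![![(⟨1,1⟩ : ℤ√5), (⟨1,-1⟩ : ℤ√5), (⟨-2,0⟩ : ℤ√5)], ![(⟨-1,1⟩ : ℤ√5), (⟨-2,0⟩ : ℤ√5), (⟨1,1⟩ : ℤ√5)], ![(⟨-2,0⟩ : ℤ√5), (⟨-1,-1⟩ : ℤ√5), (⟨1,-1⟩ : ℤ√5)]],
    ![![(⟨1,1⟩ : ℤ√5), (⟨1,-1⟩ : ℤ√5), (⟨-2,0⟩ : ℤ√5)], ![(⟨1,-1⟩ : ℤ√5), (⟨2,0⟩ : ℤ√5), (⟨-1,-1⟩ : ℤ√5)], ![(⟨2,0⟩ : ℤ√5), (⟨1,1⟩ : ℤ√5), (⟨-1,1⟩ : ℤ√5)]],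
    ![![(⟨1,1⟩ : ℤ√5), (⟨1,-1⟩ : ℤ√5), (⟨2,0⟩ : ℤ√5)], ![(⟨1,-1⟩ : ℤ√5), (⟨2,0⟩ : ℤ√5), (⟨1,1⟩ : ℤ√5)], ![(⟨-2,0⟩ : ℤ√5), (⟨-1,-1⟩ : ℤ√5), (⟨-1,1⟩ : ℤ√5)]],
    ![![(⟨1,1⟩ : ℤ√5), (⟨-1,1⟩ : ℤ√5), (⟨-2,0⟩ : ℤ√5)], ![(⟨-1,1⟩ : ℤ√5), (⟨2,0⟩ : ℤ√5), (⟨1,1⟩ : ℤ√5)], ![(⟨-2,0⟩ : ℤ√5), (⟨1,1⟩ : ℤ√5), (⟨1,-1⟩ : ℤ√5)]],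
    ![![(⟨1,1⟩ : ℤ√5), (⟨-1,1⟩ : ℤ√5), (⟨-2,0⟩ : ℤ√5)], ![(⟨1,-1⟩ : ℤ√5), (⟨-2,0⟩ : ℤ√5), (⟨-1,-1⟩ : ℤ√5)], ![(⟨2,0⟩ : ℤ√5), (⟨-1,-1⟩ : ℤ√5), (⟨-1,1⟩ : ℤ√5)]],
    ![![(⟨1,1⟩ : ℤ√5), (⟨-1,1⟩ : ℤ√5), (⟨2,0⟩ : ℤ√5)], ![(⟨1,-1⟩ : ℤ√5), (⟨-2,0⟩ : ℤ√5), (⟨1,1⟩ : ℤ√5)], ![(⟨-2,0⟩ : ℤ√5), (⟨1,1⟩ : ℤ√5), (⟨-1,1⟩ : ℤ√5)]],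
    ![![(⟨1,1⟩ : ℤ√5), (⟨1,-1⟩ : ℤ√5), (⟨-2,0⟩ : ℤ√5)], ![(⟨-1,1⟩ : ℤ√5), (⟨-2,0⟩ : ℤ√5), (⟨1,1⟩ : ℤ√5)], ![(⟨2,0⟩ : ℤ√5), (⟨1,1⟩ : ℤ√5), (⟨-1,1⟩ : ℤ√5)]],
    ![![(⟨2,0⟩ : ℤ√5), (⟨-1,-1⟩ : ℤ√5), (⟨1,-1⟩ : ℤ√5)], ![(⟨-1,-1⟩ : ℤ√5), (⟨1,-1⟩ : ℤ√5), (⟨-2,0⟩ : ℤ√5)], ![(⟨1,-1⟩ : ℤ√5), (⟨-2,0⟩ : ℤ√5), (⟨1,1⟩ : ℤ√5)]],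
    ![![(⟨1,1⟩ : ℤ√5), (⟨1,-1⟩ : ℤ√5), (⟨2,0⟩ : ℤ√5)], ![(⟨-1,1⟩ : ℤ√5), (⟨-2,0⟩ : ℤ√5), (⟨-1,-1⟩ : ℤ√5)], ![(⟨-2,0⟩ : ℤ√5), (⟨-1,-1⟩ : ℤ√5), (⟨-1,1⟩ : ℤ√5)]],
    ![![(⟨1,1⟩ : ℤ√5), (⟨1,-1⟩ : ℤ√5), (⟨2,0⟩ : ℤ√5)], ![(⟨1,-1⟩ : ℤ√5), (⟨2,0⟩ : ℤ√5), (⟨1,1⟩ : ℤ√5)], ![(⟨2,0⟩ : ℤ√5), (⟨1,1⟩ : ℤ√5), (⟨1,-1⟩ : ℤ√5)]],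
    ![![(⟨1,1⟩ : ℤ√5), (⟨-1,1⟩ : ℤ√5), (⟨-2,0⟩ : ℤ√5)], ![(⟨-1,1⟩ : ℤ√5), (⟨2,0⟩ : ℤ√5), (⟨1,1⟩ : ℤ√5)], ![(⟨2,0⟩ : ℤ√5), (⟨-1,-1⟩ : ℤ√5), (⟨-1,1⟩ : ℤ√5)]],
    ![![(⟨2,0⟩ : ℤ√5), (⟨1,1⟩ : ℤ√5), (⟨1,-1⟩ : ℤ√5)], ![(⟨-1,-1⟩ : ℤ√5), (⟨-1,1⟩ : ℤ√5), (⟨-2,0⟩ : ℤ√5)], ![(⟨1,-1⟩ : ℤ√5), (⟨2,0⟩ : ℤ√5), (⟨1,1⟩ : ℤ√5)]],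
    ![![(⟨1,1⟩ : ℤ√5), (⟨-1,1⟩ : ℤ√5), (⟨2,0⟩ : ℤ√5)], ![(⟨-1,1⟩ : ℤ√5), (⟨2,0⟩ : ℤ√5), (⟨-1,-1⟩ : ℤ√5)], ![(⟨-2,0⟩ : ℤ√5), (⟨1,1⟩ : ℤ√5), (⟨-1,1⟩ : ℤ√5)]],
    ![![(⟨1,1⟩ : ℤ√5), (⟨-1,1⟩ : ℤ√5), (⟨2,0⟩ : ℤ√5)], ![(⟨1,-1⟩ : ℤ√5), (⟨-2,0⟩ : ℤ√5), (⟨1,1⟩ : ℤ√5)], ![(⟨2,0⟩ : ℤ√5), (⟨-1,-1⟩ : ℤ√5), (⟨1,-1⟩ : ℤ√5)]],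
    ![![(⟨-1,1⟩ : ℤ√5), (⟨-2,0⟩ : ℤ√5), (⟨-1,-1⟩ : ℤ√5)], ![(⟨-2,0⟩ : ℤ√5), (⟨-1,-1⟩ : ℤ√5), (⟨-1,1⟩ : ℤ√5)], ![(⟨-1,-1⟩ : ℤ√5), (⟨-1,1⟩ : ℤ√5), (⟨-2,0⟩ : ℤ√5)]],
    ![![(⟨2,0⟩ : ℤ√5), (⟨-1,-1⟩ : ℤ√5), (⟨1,-1⟩ : ℤ√5)], ![(⟨1,1⟩ : ℤ√5), (⟨-1,1⟩ : ℤ√5), (⟨2,0⟩ : ℤ√5)], ![(⟨1,-1⟩ : ℤ√5), (⟨-2,0⟩ : ℤ√5), (⟨1,1⟩ : ℤ√5)]],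
    ![![(⟨2,0⟩ : ℤ√5), (⟨-1,-1⟩ : ℤ√5), (⟨1,-1⟩ : ℤ√5)], ![(⟨-1,-1⟩ : ℤ√5), (⟨1,-1⟩ : ℤ√5), (⟨-2,0⟩ : ℤ√5)], ![(⟨-1,1⟩ : ℤ√5), (⟨2,0⟩ : ℤ√5), (⟨-1,-1⟩ : ℤ√5)]],
    ![![(⟨1,1⟩ : ℤ√5), (⟨1,-1⟩ : ℤ√5), (⟨2,0⟩ : ℤ√5)], ![(⟨-1,1⟩ : ℤ√5), (⟨-2,0⟩ : ℤ√5), (⟨-1,-1⟩ : ℤ√5)], ![(⟨2,0⟩ : ℤ√5), (⟨1,1⟩ : ℤ√5), (⟨1,-1⟩ : ℤ√5)]],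
    ![![(⟨2,0⟩ : ℤ√5), (⟨-1,-1⟩ : ℤ√5), (⟨-1,1⟩ : ℤ√5)], ![(⟨-1,-1⟩ : ℤ√5), (⟨1,-1⟩ : ℤ√5), (⟨2,0⟩ : ℤ√5)], ![(⟨1,-1⟩ : ℤ√5), (⟨-2,0⟩ : ℤ√5), (⟨-1,-1⟩ : ℤ√5)]],
    ![![(⟨-1,1⟩ : ℤ√5), (⟨2,0⟩ : ℤ√5), (⟨-1,-1⟩ : ℤ√5)], ![(⟨-2,0⟩ : ℤ√5), (⟨1,1⟩ : ℤ√5), (⟨-1,1⟩ : ℤ√5)], ![(⟨-1,-1⟩ : ℤ√5), (⟨1,-1⟩ : ℤ√5), (⟨-2,0⟩ : ℤ√5)]],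
    ![![(⟨2,0⟩ : ℤ√5), (⟨1,1⟩ : ℤ√5), (⟨1,-1⟩ : ℤ√5)], ![(⟨1,1⟩ : ℤ√5), (⟨1,-1⟩ : ℤ√5), (⟨2,0⟩ : ℤ√5)], ![(⟨1,-1⟩ : ℤ√5), (⟨2,0⟩ : ℤ√5), (⟨1,1⟩ : ℤ√5)]],
    ![![(⟨2,0⟩ : ℤ√5), (⟨1,1⟩ : ℤ√5), (⟨1,-1⟩ : ℤ√5)], ![(⟨-1,-1⟩ : ℤ√5), (⟨-1,1⟩ : ℤ√5), (⟨-2,0⟩ : ℤ√5)], ![(⟨-1,1⟩ : ℤ√5), (⟨-2,0⟩ : ℤ√5), (⟨-1,-1⟩ : ℤ√5)]],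
    ![![(⟨1,1⟩ : ℤ√5), (⟨-1,1⟩ : ℤ√5), (⟨2,0⟩ : ℤ√5)], ![(⟨-1,1⟩ : ℤ√5), (⟨2,0⟩ : ℤ√5), (⟨-1,-1⟩ : ℤ√5)], ![(⟨2,0⟩ : ℤ√5), (⟨-1,-1⟩ : ℤ√5), (⟨1,-1⟩ : ℤ√5)]],
    ![![(⟨2,0⟩ : ℤ√5), (⟨1,1⟩ : ℤ√5), (⟨-1,1⟩ : ℤ√5)], ![(⟨-1,-1⟩ : ℤ√5), (⟨-1,1⟩ : ℤ√5), (⟨2,0⟩ : ℤ√5)], ![(⟨1,-1⟩ : ℤ√5), (⟨2,0⟩ : ℤ√5), (⟨-1,-1⟩ : ℤ√5)]],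
    ![![(⟨-1,1⟩ : ℤ√5), (⟨-2,0⟩ : ℤ√5), (⟨-1,-1⟩ : ℤ√5)], ![(⟨2,0⟩ : ℤ√5), (⟨1,1⟩ : ℤ√5), (⟨1,-1⟩ : ℤ√5)], ![(⟨-1,-1⟩ : ℤ√5), (⟨-1,1⟩ : ℤ√5), (⟨-2,0⟩ : ℤ√5)]],
    ![![(⟨-1,1⟩ : ℤ√5), (⟨-2,0⟩ : ℤ√5), (⟨-1,-1⟩ : ℤ√5)], ![(⟨-2,0⟩ : ℤ√5), (⟨-1,-1⟩ : ℤ√5), (⟨-1,1⟩ : ℤ√5)], ![(⟨1,1⟩ : ℤ√5), (⟨1,-1⟩ : ℤ√5), (⟨2,0⟩ : ℤ√5)]],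
    ![![(⟨2,0⟩ : ℤ√5), (⟨-1,-1⟩ : ℤ√5), (⟨1,-1⟩ : ℤ√5)], ![(⟨1,1⟩ : ℤ√5), (⟨-1,1⟩ : ℤ√5), (⟨2,0⟩ : ℤ√5)], ![(⟨-1,1⟩ : ℤ√5), (⟨2,0⟩ : ℤ√5), (⟨-1,-1⟩ : ℤ√5)]],
    ![![(⟨2,0⟩ : ℤ√5), (⟨-1,-1⟩ : ℤ√5), (⟨-1,1⟩ : ℤ√5)], ![(⟨-1,-1⟩ : ℤ√5), (⟨1,-1⟩ : ℤ√5), (⟨2,0⟩ : ℤ√5)], ![(⟨-1,1⟩ : ℤ√5), (⟨2,0⟩ : ℤ√5), (⟨1,1⟩ : ℤ√5)]],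
    ![![(⟨-1,1⟩ : ℤ√5), (⟨-2,0⟩ : ℤ√5), (⟨1,1⟩ : ℤ√5)], ![(⟨-2,0⟩ : ℤ√5), (⟨-1,-1⟩ : ℤ√5), (⟨1,-1⟩ : ℤ√5)], ![(⟨-1,-1⟩ : ℤ√5), (⟨-1,1⟩ : ℤ√5), (⟨2,0⟩ : ℤ√5)]],
    ![![(⟨2,0⟩ : ℤ√5), (⟨-1,-1⟩ : ℤ√5), (⟨-1,1⟩ : ℤ√5)], ![(⟨1,1⟩ : ℤ√5), (⟨-1,1⟩ : ℤ√5), (⟨-2,0⟩ : ℤ√5)], ![(⟨1,-1⟩ : ℤ√5), (⟨-2,0⟩ : ℤ√5), (⟨-1,-1⟩ : ℤ√5)]],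
    ![![(⟨-1,1⟩ : ℤ√5), (⟨2,0⟩ : ℤ√5), (⟨-1,-1⟩ : ℤ√5)], ![(⟨2,0⟩ : ℤ√5), (⟨-1,-1⟩ : ℤ√5), (⟨1,-1⟩ : ℤ√5)], ![(⟨-1,-1⟩ : ℤ√5), (⟨1,-1⟩ : ℤ√5), (⟨-2,0⟩ : ℤ√5)]],
    ![![(⟨-1,1⟩ : ℤ√5), (⟨2,0⟩ : ℤ√5), (⟨-1,-1⟩ : ℤ√5)], ![(⟨-2,0⟩ : ℤ√5), (⟨1,1⟩ : ℤ√5), (⟨-1,1⟩ : ℤ√5)], ![(⟨1,1⟩ : ℤ√5), (⟨-1,1⟩ : ℤ√5), (⟨2,0⟩ : ℤ√5)]],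
    ![![(⟨2,0⟩ : ℤ√5), (⟨1,1⟩ : ℤ√5), (⟨1,-1⟩ : ℤ√5)], ![(⟨1,1⟩ : ℤ√5), (⟨1,-1⟩ : ℤ√5), (⟨2,0⟩ : ℤ√5)], ![(⟨-1,1⟩ : ℤ√5), (⟨-2,0⟩ : ℤ√5), (⟨-1,-1⟩ : ℤ√5)]],
    ![![(⟨2,0⟩ : ℤ√5), (⟨1,1⟩ : ℤ√5), (⟨-1,1⟩ : ℤ√5)], ![(⟨-1,-1⟩ : ℤ√5), (⟨-1,1⟩ : ℤ√5), (⟨2,0⟩ : ℤ√5)], ![(⟨-1,1⟩ : ℤ√5), (⟨-2,0⟩ : ℤ√5), (⟨1,1⟩ : ℤ√5)]],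
    ![![(⟨-1,1⟩ : ℤ√5), (⟨2,0⟩ : ℤ√5), (⟨1,1⟩ : ℤ√5)], ![(⟨-2,0⟩ : ℤ√5), (⟨1,1⟩ : ℤ√5), (⟨1,-1⟩ : ℤ√5)], ![(⟨-1,-1⟩ : ℤ√5), (⟨1,-1⟩ : ℤ√5), (⟨2,0⟩ : ℤ√5)]],
    ![![(⟨2,0⟩ : ℤ√5), (⟨1,1⟩ : ℤ√5), (⟨-1,1⟩ : ℤ√5)], ![(⟨1,1⟩ : ℤ√5), (⟨1,-1⟩ : ℤ√5), (⟨-2,0⟩ : ℤ√5)], ![(⟨1,-1⟩ : ℤ√5), (⟨2,0⟩ : ℤ√5), (⟨-1,-1⟩ : ℤ√5)]],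
    ![![(⟨-1,1⟩ : ℤ√5), (⟨-2,0⟩ : ℤ√5), (⟨-1,-1⟩ : ℤ√5)], ![(⟨2,0⟩ : ℤ√5), (⟨1,1⟩ : ℤ√5), (⟨1,-1⟩ : ℤ√5)], ![(⟨1,1⟩ : ℤ√5), (⟨1,-1⟩ : ℤ√5), (⟨2,0⟩ : ℤ√5)]],
    ![![(⟨0,0⟩ : ℤ√5), (⟨0,0⟩ : ℤ√5), (⟨-4,0⟩ : ℤ√5)], ![(⟨-4,0⟩ : ℤ√5), (⟨0,0⟩ : ℤ√5), (⟨0,0⟩ : ℤ√5)], ![(⟨0,0⟩ : ℤ√5), (⟨4,0⟩ : ℤ√5), (⟨0,0⟩ : ℤ√5)]],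
    ![![(⟨0,0⟩ : ℤ√5), (⟨-4,0⟩ : ℤ√5), (⟨0,0⟩ : ℤ√5)], ![(⟨0,0⟩ : ℤ√5), (⟨0,0⟩ : ℤ√5), (⟨4,0⟩ : ℤ√5)], ![(⟨-4,0⟩ : ℤ√5), (⟨0,0⟩ : ℤ√5), (⟨0,0⟩ : ℤ√5)]],
    ![![(⟨2,0⟩ : ℤ√5), (⟨-1,-1⟩ : ℤ√5), (⟨-1,1⟩ : ℤ√5)], ![(⟨1,1⟩ : ℤ√5), (⟨-1,1⟩ : ℤ√5), (⟨-2,0⟩ : ℤ√5)], ![(⟨-1,1⟩ : ℤ√5), (⟨2,0⟩ : ℤ√5), (⟨1,1⟩ : ℤ√5)]],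
    ![![(⟨-1,1⟩ : ℤ√5), (⟨-2,0⟩ : ℤ√5), (⟨1,1⟩ : ℤ√5)], ![(⟨2,0⟩ : ℤ√5), (⟨1,1⟩ : ℤ√5), (⟨-1,1⟩ : ℤ√5)], ![(⟨-1,-1⟩ : ℤ√5), (⟨-1,1⟩ : ℤ√5), (⟨2,0⟩ : ℤ√5)]],
    ![![(⟨-1,1⟩ : ℤ√5), (⟨-2,0⟩ : ℤ√5), (⟨1,1⟩ : ℤ√5)], ![(⟨-2,0⟩ : ℤ√5), (⟨-1,-1⟩ : ℤ√5), (⟨1,-1⟩ : ℤ√5)], ![(⟨1,1⟩ : ℤ√5), (⟨1,-1⟩ : ℤ√5), (⟨-2,0⟩ : ℤ√5)]],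
    ![![(⟨-1,1⟩ : ℤ√5), (⟨2,0⟩ : ℤ√5), (⟨-1,-1⟩ : ℤ√5)], ![(⟨2,0⟩ : ℤ√5), (⟨-1,-1⟩ : ℤ√5), (⟨1,-1⟩ : ℤ√5)], ![(⟨1,1⟩ : ℤ√5), (⟨-1,1⟩ : ℤ√5), (⟨2,0⟩ : ℤ√5)]],
    ![![(⟨0,0⟩ : ℤ√5), (⟨0,0⟩ : ℤ√5), (⟨-4,0⟩ : ℤ√5)], ![(⟨-4,0⟩ : ℤ√5), (⟨0,0⟩ : ℤ√5), (⟨0,0⟩ : ℤ√5)], ![(⟨0,0⟩ : ℤ√5), (⟨-4,0⟩ : ℤ√5), (⟨0,0⟩ : ℤ√5)]],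
    ![![(⟨0,0⟩ : ℤ√5), (⟨4,0⟩ : ℤ√5), (⟨0,0⟩ : ℤ√5)], ![(⟨0,0⟩ : ℤ√5), (⟨0,0⟩ : ℤ√5), (⟨4,0⟩ : ℤ√5)], ![(⟨-4,0⟩ : ℤ√5), (⟨0,0⟩ : ℤ√5), (⟨0,0⟩ : ℤ√5)]],
    ![![(⟨2,0⟩ : ℤ√5), (⟨1,1⟩ : ℤ√5), (⟨-1,1⟩ : ℤ√5)], ![(⟨1,1⟩ : ℤ√5), (⟨1,-1⟩ : ℤ√5), (⟨-2,0⟩ : ℤ√5)], ![(⟨-1,1⟩ : ℤ√5), (⟨-2,0⟩ : ℤ√5), (⟨1,1⟩ : ℤ√5)]],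
    ![![(⟨-1,1⟩ : ℤ√5), (⟨2,0⟩ : ℤ√5), (⟨1,1⟩ : ℤ√5)], ![(⟨2,0⟩ : ℤ√5), (⟨-1,-1⟩ : ℤ√5), (⟨-1,1⟩ : ℤ√5)], ![(⟨-1,-1⟩ : ℤ√5), (⟨1,-1⟩ : ℤ√5), (⟨2,0⟩ : ℤ√5)]],
    ![![(⟨-1,1⟩ : ℤ√5), (⟨2,0⟩ : ℤ√5), (⟨1,1⟩ : ℤ√5)], ![(⟨-2,0⟩ : ℤ√5), (⟨1,1⟩ : ℤ√5), (⟨1,-1⟩ : ℤ√5)], ![(⟨1,1⟩ : ℤ√5), (⟨-1,1⟩ : ℤ√5), (⟨-2,0⟩ : ℤ√5)]],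
    ![![(⟨1,-1⟩ : ℤ√5), (⟨-2,0⟩ : ℤ√5), (⟨-1,-1⟩ : ℤ√5)], ![(⟨-2,0⟩ : ℤ√5), (⟨1,1⟩ : ℤ√5), (⟨1,-1⟩ : ℤ√5)], ![(⟨-1,-1⟩ : ℤ√5), (⟨1,-1⟩ : ℤ√5), (⟨2,0⟩ : ℤ√5)]],
    ![![(⟨0,0⟩ : ℤ√5), (⟨0,0⟩ : ℤ√5), (⟨-4,0⟩ : ℤ√5)], ![(⟨4,0⟩ : ℤ√5), (⟨0,0⟩ : ℤ√5), (⟨0,0⟩ : ℤ√5)], ![(⟨0,0⟩ : ℤ√5), (⟨4,0⟩ : ℤ√5), (⟨0,0⟩ : ℤ√5)]],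
    ![![(⟨0,0⟩ : ℤ√5), (⟨-4,0⟩ : ℤ√5), (⟨0,0⟩ : ℤ√5)], ![(⟨0,0⟩ : ℤ√5), (⟨0,0⟩ : ℤ√5), (⟨-4,0⟩ : ℤ√5)], ![(⟨-4,0⟩ : ℤ√5), (⟨0,0⟩ : ℤ√5), (⟨0,0⟩ : ℤ√5)]],
    ![![(⟨0,0⟩ : ℤ√5), (⟨-4,0⟩ : ℤ√5), (⟨0,0⟩ : ℤ√5)], ![(⟨0,0⟩ : ℤ√5), (⟨0,0⟩ : ℤ√5), (⟨4,0⟩ : ℤ√5)], ![(⟨4,0⟩ : ℤ√5), (⟨0,0⟩ : ℤ√5), (⟨0,0⟩ : ℤ√5)]],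
    ![![(⟨-1,1⟩ : ℤ√5), (⟨-2,0⟩ : ℤ√5), (⟨1,1⟩ : ℤ√5)], ![(⟨2,0⟩ : ℤ√5), (⟨1,1⟩ : ℤ√5), (⟨-1,1⟩ : ℤ√5)], ![(⟨1,1⟩ : ℤ√5), (⟨1,-1⟩ : ℤ√5), (⟨-2,0⟩ : ℤ√5)]],
    ![![(⟨0,0⟩ : ℤ√5), (⟨0,0⟩ : ℤ√5), (⟨4,0⟩ : ℤ√5)], ![(⟨-4,0⟩ : ℤ√5), (⟨0,0⟩ : ℤ√5), (⟨0,0⟩ : ℤ√5)], ![(⟨0,0⟩ : ℤ√5), (⟨4,0⟩ : ℤ√5), (⟨0,0⟩ : ℤ√5)]],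
    ![![(⟨1,-1⟩ : ℤ√5), (⟨2,0⟩ : ℤ√5), (⟨-1,-1⟩ : ℤ√5)], ![(⟨-2,0⟩ : ℤ√5), (⟨-1,-1⟩ : ℤ√5), (⟨1,-1⟩ : ℤ√5)], ![(⟨-1,-1⟩ : ℤ√5), (⟨-1,1⟩ : ℤ√5), (⟨2,0⟩ : ℤ√5)]],
    ![![(⟨0,0⟩ : ℤ√5), (⟨0,0⟩ : ℤ√5), (⟨-4,0⟩ : ℤ√5)], ![(⟨4,0⟩ : ℤ√5), (⟨0,0⟩ : ℤ√5), (⟨0,0⟩ : ℤ√5)], ![(⟨0,0⟩ : ℤ√5), (⟨-4,0⟩ : ℤ√5), (⟨0,0⟩ : ℤ√5)]],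
    ![![(⟨0,0⟩ : ℤ√5), (⟨4,0⟩ : ℤ√5), (⟨0,0⟩ : ℤ√5)], ![(⟨0,0⟩ : ℤ√5), (⟨0,0⟩ : ℤ√5), (⟨-4,0⟩ : ℤ√5)], ![(⟨-4,0⟩ : ℤ√5), (⟨0,0⟩ : ℤ√5), (⟨0,0⟩ : ℤ√5)]],
    ![![(⟨0,0⟩ : ℤ√5), (⟨4,0⟩ : ℤ√5), (⟨0,0⟩ : ℤ√5)], ![(⟨0,0⟩ : ℤ√5), (⟨0,0⟩ : ℤ√5), (⟨4,0⟩ : ℤ√5)], ![(⟨4,0⟩ : ℤ√5), (⟨0,0⟩ : ℤ√5), (⟨0,0⟩ : ℤ√5)]],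
    ![![(⟨-1,1⟩ : ℤ√5), (⟨2,0⟩ : ℤ√5), (⟨1,1⟩ : ℤ√5)], ![(⟨2,0⟩ : ℤ√5), (⟨-1,-1⟩ : ℤ√5), (⟨-1,1⟩ : ℤ√5)], ![(⟨1,1⟩ : ℤ√5), (⟨-1,1⟩ : ℤ√5), (⟨-2,0⟩ : ℤ√5)]],
    ![![(⟨0,0⟩ : ℤ√5), (⟨0,0⟩ : ℤ√5), (⟨4,0⟩ : ℤ√5)], ![(⟨-4,0⟩ : ℤ√5), (⟨0,0⟩ : ℤ√5), (⟨0,0⟩ : ℤ√5)], ![(⟨0,0⟩ : ℤ√5), (⟨-4,0⟩ : ℤ√5), (⟨0,0⟩ : ℤ√5)]],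
    ![![(⟨1,-1⟩ : ℤ√5), (⟨-2,0⟩ : ℤ√5), (⟨-1,-1⟩ : ℤ√5)], ![(⟨2,0⟩ : ℤ√5), (⟨-1,-1⟩ : ℤ√5), (⟨-1,1⟩ : ℤ√5)], ![(⟨-1,-1⟩ : ℤ√5), (⟨1,-1⟩ : ℤ√5), (⟨2,0⟩ : ℤ√5)]],
    ![![(⟨1,-1⟩ : ℤ√5), (⟨-2,0⟩ : ℤ√5), (⟨-1,-1⟩ : ℤ√5)], ![(⟨-2,0⟩ : ℤ√5), (⟨1,1⟩ : ℤ√5), (⟨1,-1⟩ : ℤ√5)], ![(⟨1,1⟩ : ℤ√5), (⟨-1,1⟩ : ℤ√5), (⟨-2,0⟩ : ℤ√5)]],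
    ![![(⟨0,0⟩ : ℤ√5), (⟨-4,0⟩ : ℤ√5), (⟨0,0⟩ : ℤ√5)], ![(⟨0,0⟩ : ℤ√5), (⟨0,0⟩ : ℤ√5), (⟨-4,0⟩ : ℤ√5)], ![(⟨4,0⟩ : ℤ√5), (⟨0,0⟩ : ℤ√5), (⟨0,0⟩ : ℤ√5)]],
    ![![(⟨-2,0⟩ : ℤ√5), (⟨-1,-1⟩ : ℤ√5), (⟨1,-1⟩ : ℤ√5)], ![(⟨-1,-1⟩ : ℤ√5), (⟨-1,1⟩ : ℤ√5), (⟨2,0⟩ : ℤ√5)], ![(⟨1,-1⟩ : ℤ√5), (⟨2,0⟩ : ℤ√5), (⟨-1,-1⟩ : ℤ√5)]],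
    ![![(⟨1,-1⟩ : ℤ√5), (⟨-2,0⟩ : ℤ√5), (⟨1,1⟩ : ℤ√5)], ![(⟨-2,0⟩ : ℤ√5), (⟨1,1⟩ : ℤ√5), (⟨-1,1⟩ : ℤ√5)], ![(⟨-1,-1⟩ : ℤ√5), (⟨1,-1⟩ : ℤ√5), (⟨-2,0⟩ : ℤ√5)]],
    ![![(⟨0,0⟩ : ℤ√5), (⟨0,0⟩ : ℤ√5), (⟨4,0⟩ : ℤ√5)], ![(⟨4,0⟩ : ℤ√5), (⟨0,0⟩ : ℤ√5), (⟨0,0⟩ : ℤ√5)], ![(⟨0,0⟩ : ℤ√5), (⟨4,0⟩ : ℤ√5), (⟨0,0⟩ : ℤ√5)]],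
    ![![(⟨1,-1⟩ : ℤ√5), (⟨2,0⟩ : ℤ√5), (⟨-1,-1⟩ : ℤ√5)], ![(⟨2,0⟩ : ℤ√5), (⟨1,1⟩ : ℤ√5), (⟨-1,1⟩ : ℤ√5)], ![(⟨-1,-1⟩ : ℤ√5), (⟨-1,1⟩ : ℤ√5), (⟨2,0⟩ : ℤ√5)]],
    ![![(⟨1,-1⟩ : ℤ√5), (⟨2,0⟩ : ℤ√5), (⟨-1,-1⟩ : ℤ√5)], ![(⟨-2,0⟩ : ℤ√5), (⟨-1,-1⟩ : ℤ√5), (⟨1,-1⟩ : ℤ√5)], ![(⟨1,1⟩ : ℤ√5), (⟨1,-1⟩ : ℤ√5), (⟨-2,0⟩ : ℤ√5)]],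
    ![![(⟨0,0⟩ : ℤ√5), (⟨4,0⟩ : ℤ√5), (⟨0,0⟩ : ℤ√5)], ![(⟨0,0⟩ : ℤ√5), (⟨0,0⟩ : ℤ√5), (⟨-4,0⟩ : ℤ√5)], ![(⟨4,0⟩ : ℤ√5), (⟨0,0⟩ : ℤ√5), (⟨0,0⟩ : ℤ√5)]],
    ![![(⟨-2,0⟩ : ℤ√5), (⟨1,1⟩ : ℤ√5), (⟨1,-1⟩ : ℤ√5)], ![(⟨-1,-1⟩ : ℤ√5), (⟨1,-1⟩ : ℤ√5), (⟨2,0⟩ : ℤ√5)], ![(⟨1,-1⟩ : ℤ√5), (⟨-2,0⟩ : ℤ√5), (⟨-1,-1⟩ : ℤ√5)]],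
    ![![(⟨1,-1⟩ : ℤ√5), (⟨2,0⟩ : ℤ√5), (⟨1,1⟩ : ℤ√5)], ![(⟨-2,0⟩ : ℤ√5), (⟨-1,-1⟩ : ℤ√5), (⟨-1,1⟩ : ℤ√5)], ![(⟨-1,-1⟩ : ℤ√5), (⟨-1,1⟩ : ℤ√5), (⟨-2,0⟩ : ℤ√5)]],
    ![![(⟨0,0⟩ : ℤ√5), (⟨0,0⟩ : ℤ√5), (⟨4,0⟩ : ℤ√5)], ![(⟨4,0⟩ : ℤ√5), (⟨0,0⟩ : ℤ√5), (⟨0,0⟩ : ℤ√5)], ![(⟨0,0⟩ : ℤ√5), (⟨-4,0⟩ : ℤ√5), (⟨0,0⟩ : ℤ√5)]],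
    ![![(⟨1,-1⟩ : ℤ√5), (⟨-2,0⟩ : ℤ√5), (⟨-1,-1⟩ : ℤ√5)], ![(⟨2,0⟩ : ℤ√5), (⟨-1,-1⟩ : ℤ√5), (⟨-1,1⟩ : ℤ√5)], ![(⟨1,1⟩ : ℤ√5), (⟨-1,1⟩ : ℤ√5), (⟨-2,0⟩ : ℤ√5)]],
    ![![(⟨-2,0⟩ : ℤ√5), (⟨-1,-1⟩ : ℤ√5), (⟨1,-1⟩ : ℤ√5)], ![(⟨-1,-1⟩ : ℤ√5), (⟨-1,1⟩ : ℤ√5), (⟨2,0⟩ : ℤ√5)], ![(⟨-1,1⟩ : ℤ√5), (⟨-2,0⟩ : ℤ√5), (⟨1,1⟩ : ℤ√5)]],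
    ![![(⟨-2,0⟩ : ℤ√5), (⟨-1,-1⟩ : ℤ√5), (⟨-1,1⟩ : ℤ√5)], ![(⟨-1,-1⟩ : ℤ√5), (⟨-1,1⟩ : ℤ√5), (⟨-2,0⟩ : ℤ√5)], ![(⟨1,-1⟩ : ℤ√5), (⟨2,0⟩ : ℤ√5), (⟨1,1⟩ : ℤ√5)]],
    ![![(⟨-2,0⟩ : ℤ√5), (⟨-1,-1⟩ : ℤ√5), (⟨1,-1⟩ : ℤ√5)], ![(⟨1,1⟩ : ℤ√5), (⟨1,-1⟩ : ℤ√5), (⟨-2,0⟩ : ℤ√5)], ![(⟨1,-1⟩ : ℤ√5), (⟨2,0⟩ : ℤ√5), (⟨-1,-1⟩ : ℤ√5)]],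
    ![![(⟨1,-1⟩ : ℤ√5), (⟨-2,0⟩ : ℤ√5), (⟨1,1⟩ : ℤ√5)], ![(⟨2,0⟩ : ℤ√5), (⟨-1,-1⟩ : ℤ√5), (⟨1,-1⟩ : ℤ√5)], ![(⟨-1,-1⟩ : ℤ√5), (⟨1,-1⟩ : ℤ√5), (⟨-2,0⟩ : ℤ√5)]],
    ![![(⟨1,-1⟩ : ℤ√5), (⟨-2,0⟩ : ℤ√5), (⟨1,1⟩ : ℤ√5)], ![(⟨-2,0⟩ : ℤ√5), (⟨1,1⟩ : ℤ√5), (⟨-1,1⟩ : ℤ√5)], ![(⟨1,1⟩ : ℤ√5), (⟨-1,1⟩ : ℤ√5), (⟨2,0⟩ : ℤ√5)]],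
    ![![(⟨1,-1⟩ : ℤ√5), (⟨2,0⟩ : ℤ√5), (⟨-1,-1⟩ : ℤ√5)], ![(⟨2,0⟩ : ℤ√5), (⟨1,1⟩ : ℤ√5), (⟨-1,1⟩ : ℤ√5)], ![(⟨1,1⟩ : ℤ√5), (⟨1,-1⟩ : ℤ√5), (⟨-2,0⟩ : ℤ√5)]],
    ![![(⟨-2,0⟩ : ℤ√5), (⟨1,1⟩ : ℤ√5), (⟨1,-1⟩ : ℤ√5)], ![(⟨-1,-1⟩ : ℤ√5), (⟨1,-1⟩ : ℤ√5), (⟨2,0⟩ : ℤ√5)], ![(⟨-1,1⟩ : ℤ√5), (⟨2,0⟩ : ℤ√5), (⟨1,1⟩ : ℤ√5)]],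
    ![![(⟨-2,0⟩ : ℤ√5), (⟨1,1⟩ : ℤ√5), (⟨-1,1⟩ : ℤ√5)], ![(⟨-1,-1⟩ : ℤ√5), (⟨1,-1⟩ : ℤ√5), (⟨-2,0⟩ : ℤ√5)], ![(⟨1,-1⟩ : ℤ√5), (⟨-2,0⟩ : ℤ√5), (⟨1,1⟩ : ℤ√5)]],
    ![![(⟨-2,0⟩ : ℤ√5), (⟨1,1⟩ : ℤ√5), (⟨1,-1⟩ : ℤ√5)], ![(⟨1,1⟩ : ℤ√5), (⟨-1,1⟩ : ℤ√5), (⟨-2,0⟩ : ℤ√5)], ![(⟨1,-1⟩ : ℤ√5), (⟨-2,0⟩ : ℤ√5), (⟨-1,-1⟩ : ℤ√5)]],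
    ![![(⟨1,-1⟩ : ℤ√5), (⟨2,0⟩ : ℤ√5), (⟨1,1⟩ : ℤ√5)], ![(⟨2,0⟩ : ℤ√5), (⟨1,1⟩ : ℤ√5), (⟨1,-1⟩ : ℤ√5)], ![(⟨-1,-1⟩ : ℤ√5), (⟨-1,1⟩ : ℤ√5), (⟨-2,0⟩ : ℤ√5)]],
    ![![(⟨1,-1⟩ : ℤ√5), (⟨2,0⟩ : ℤ√5), (⟨1,1⟩ : ℤ√5)], ![(⟨-2,0⟩ : ℤ√5), (⟨-1,-1⟩ : ℤ√5), (⟨-1,1⟩ : ℤ√5)], ![(⟨1,1⟩ : ℤ√5), (⟨1,-1⟩ : ℤ√5), (⟨2,0⟩ : ℤ√5)]],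
    ![![(⟨-1,-1⟩ : ℤ√5), (⟨1,-1⟩ : ℤ√5), (⟨-2,0⟩ : ℤ√5)], ![(⟨1,-1⟩ : ℤ√5), (⟨-2,0⟩ : ℤ√5), (⟨1,1⟩ : ℤ√5)], ![(⟨-2,0⟩ : ℤ√5), (⟨1,1⟩ : ℤ√5), (⟨-1,1⟩ : ℤ√5)]],
    ![![(⟨-2,0⟩ : ℤ√5), (⟨-1,-1⟩ : ℤ√5), (⟨1,-1⟩ : ℤ√5)], ![(⟨1,1⟩ : ℤ√5), (⟨1,-1⟩ : ℤ√5), (⟨-2,0⟩ : ℤ√5)], ![(⟨-1,1⟩ : ℤ√5), (⟨-2,0⟩ : ℤ√5), (⟨1,1⟩ : ℤ√5)]],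
    ![![(⟨-2,0⟩ : ℤ√5), (⟨-1,-1⟩ : ℤ√5), (⟨-1,1⟩ : ℤ√5)], ![(⟨1,1⟩ : ℤ√5), (⟨1,-1⟩ : ℤ√5), (⟨2,0⟩ : ℤ√5)], ![(⟨1,-1⟩ : ℤ√5), (⟨2,0⟩ : ℤ√5), (⟨1,1⟩ : ℤ√5)]],
    ![![(⟨-2,0⟩ : ℤ√5), (⟨-1,-1⟩ : ℤ√5), (⟨-1,1⟩ : ℤ√5)], ![(⟨-1,-1⟩ : ℤ√5), (⟨-1,1⟩ : ℤ√5), (⟨-2,0⟩ : ℤ√5)], ![(⟨-1,1⟩ : ℤ√5), (⟨-2,0⟩ : ℤ√5), (⟨-1,-1⟩ : ℤ√5)]],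
    ![![(⟨1,-1⟩ : ℤ√5), (⟨-2,0⟩ : ℤ√5), (⟨1,1⟩ : ℤ√5)], ![(⟨2,0⟩ : ℤ√5), (⟨-1,-1⟩ : ℤ√5), (⟨1,-1⟩ : ℤ√5)], ![(⟨1,1⟩ : ℤ√5), (⟨-1,1⟩ : ℤ√5), (⟨2,0⟩ : ℤ√5)]],
    ![![(⟨-1,-1⟩ : ℤ√5), (⟨-1,1⟩ : ℤ√5), (⟨-2,0⟩ : ℤ√5)], ![(⟨1,-1⟩ : ℤ√5), (⟨2,0⟩ : ℤ√5), (⟨1,1⟩ : ℤ√5)], ![(⟨-2,0⟩ : ℤ√5), (⟨-1,-1⟩ : ℤ√5), (⟨-1,1⟩ : ℤ√5)]],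
    ![![(⟨-2,0⟩ : ℤ√5), (⟨1,1⟩ : ℤ√5), (⟨1,-1⟩ : ℤ√5)], ![(⟨1,1⟩ : ℤ√5), (⟨-1,1⟩ : ℤ√5), (⟨-2,0⟩ : ℤ√5)], ![(⟨-1,1⟩ : ℤ√5), (⟨2,0⟩ : ℤ√5), (⟨1,1⟩ : ℤ√5)]],
    ![![(⟨-2,0⟩ : ℤ√5), (⟨1,1⟩ : ℤ√5), (⟨-1,1⟩ : ℤ√5)], ![(⟨1,1⟩ : ℤ√5), (⟨-1,1⟩ : ℤ√5), (⟨2,0⟩ : ℤ√5)], ![(⟨1,-1⟩ : ℤ√5), (⟨-2,0⟩ : ℤ√5), (⟨1,1⟩ : ℤ√5)]],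
    ![![(⟨-2,0⟩ : ℤ√5), (⟨1,1⟩ : ℤ√5), (⟨-1,1⟩ : ℤ√5)], ![(⟨-1,-1⟩ : ℤ√5), (⟨1,-1⟩ : ℤ√5), (⟨-2,0⟩ : ℤ√5)], ![(⟨-1,1⟩ : ℤ√5), (⟨2,0⟩ : ℤ√5), (⟨-1,-1⟩ : ℤ√5)]],
    ![![(⟨1,-1⟩ : ℤ√5), (⟨2,0⟩ : ℤ√5), (⟨1,1⟩ : ℤ√5)], ![(⟨2,0⟩ : ℤ√5), (⟨1,1⟩ : ℤ√5), (⟨1,-1⟩ : ℤ√5)], ![(⟨1,1⟩ : ℤ√5), (⟨1,-1⟩ : ℤ√5), (⟨2,0⟩ : ℤ√5)]],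
    ![![(⟨-1,-1⟩ : ℤ√5), (⟨1,-1⟩ : ℤ√5), (⟨-2,0⟩ : ℤ√5)], ![(⟨-1,1⟩ : ℤ√5), (⟨2,0⟩ : ℤ√5), (⟨-1,-1⟩ : ℤ√5)], ![(⟨-2,0⟩ : ℤ√5), (⟨1,1⟩ : ℤ√5), (⟨-1,1⟩ : ℤ√5)]],
    ![![(⟨-1,-1⟩ : ℤ√5), (⟨1,-1⟩ : ℤ√5), (⟨-2,0⟩ : ℤ√5)], ![(⟨1,-1⟩ : ℤ√5), (⟨-2,0⟩ : ℤ√5), (⟨1,1⟩ : ℤ√5)], ![(⟨2,0⟩ : ℤ√5), (⟨-1,-1⟩ : ℤ√5), (⟨1,-1⟩ : ℤ√5)]],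
    ![![(⟨-2,0⟩ : ℤ√5), (⟨-1,-1⟩ : ℤ√5), (⟨-1,1⟩ : ℤ√5)], ![(⟨1,1⟩ : ℤ√5), (⟨1,-1⟩ : ℤ√5), (⟨2,0⟩ : ℤ√5)], ![(⟨-1,1⟩ : ℤ√5), (⟨-2,0⟩ : ℤ√5), (⟨-1,-1⟩ : ℤ√5)]],
    ![![(⟨-1,-1⟩ : ℤ√5), (⟨1,-1⟩ : ℤ√5), (⟨2,0⟩ : ℤ√5)], ![(⟨1,-1⟩ : ℤ√5), (⟨-2,0⟩ : ℤ√5), (⟨-1,-1⟩ : ℤ√5)], ![(⟨-2,0⟩ : ℤ√5), (⟨1,1⟩ : ℤ√5), (⟨1,-1⟩ : ℤ√5)]],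
    ![![(⟨-1,-1⟩ : ℤ√5), (⟨-1,1⟩ : ℤ√5), (⟨-2,0⟩ : ℤ√5)], ![(⟨-1,1⟩ : ℤ√5), (⟨-2,0⟩ : ℤ√5), (⟨-1,-1⟩ : ℤ√5)], ![(⟨-2,0⟩ : ℤ√5), (⟨-1,-1⟩ : ℤ√5), (⟨-1,1⟩ : ℤ√5)]],
    ![![(⟨-1,-1⟩ : ℤ√5), (⟨-1,1⟩ : ℤ√5), (⟨-2,0⟩ : ℤ√5)], ![(⟨1,-1⟩ : ℤ√5), (⟨2,0⟩ : ℤ√5), (⟨1,1⟩ : ℤ√5)], ![(⟨2,0⟩ : ℤ√5), (⟨1,1⟩ : ℤ√5), (⟨1,-1⟩ : ℤ√5)]],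
    ![![(⟨-2,0⟩ : ℤ√5), (⟨1,1⟩ : ℤ√5), (⟨-1,1⟩ : ℤ√5)], ![(⟨1,1⟩ : ℤ√5), (⟨-1,1⟩ : ℤ√5), (⟨2,0⟩ : ℤ√5)], ![(⟨-1,1⟩ : ℤ√5), (⟨2,0⟩ : ℤ√5), (⟨-1,-1⟩ : ℤ√5)]],
    ![![(⟨-1,-1⟩ : ℤ√5), (⟨-1,1⟩ : ℤ√5), (⟨2,0⟩ : ℤ√5)], ![(⟨1,-1⟩ : ℤ√5), (⟨2,0⟩ : ℤ√5), (⟨-1,-1⟩ : ℤ√5)], ![(⟨-2,0⟩ : ℤ√5), (⟨-1,-1⟩ : ℤ√5), (⟨1,-1⟩ : ℤ√5)]],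
    ![![(⟨-1,-1⟩ : ℤ√5), (⟨1,-1⟩ : ℤ√5), (⟨-2,0⟩ : ℤ√5)], ![(⟨-1,1⟩ : ℤ√5), (⟨2,0⟩ : ℤ√5), (⟨-1,-1⟩ : ℤ√5)], ![(⟨2,0⟩ : ℤ√5), (⟨-1,-1⟩ : ℤ√5), (⟨1,-1⟩ : ℤ√5)]],
    ![![(⟨-1,-1⟩ : ℤ√5), (⟨1,-1⟩ : ℤ√5), (⟨2,0⟩ : ℤ√5)], ![(⟨-1,1⟩ : ℤ√5), (⟨2,0⟩ : ℤ√5), (⟨1,1⟩ : ℤ√5)], ![(⟨-2,0⟩ : ℤ√5), (⟨1,1⟩ : ℤ√5), (⟨1,-1⟩ : ℤ√5)]],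
    ![![(⟨-1,-1⟩ : ℤ√5), (⟨1,-1⟩ : ℤ√5), (⟨2,0⟩ : ℤ√5)], ![(⟨1,-1⟩ : ℤ√5), (⟨-2,0⟩ : ℤ√5), (⟨-1,-1⟩ : ℤ√5)], ![(⟨2,0⟩ : ℤ√5), (⟨-1,-1⟩ : ℤ√5), (⟨-1,1⟩ : ℤ√5)]],
    ![![(⟨-1,-1⟩ : ℤ√5), (⟨-1,1⟩ : ℤ√5), (⟨-2,0⟩ : ℤ√5)], ![(⟨-1,1⟩ : ℤ√5), (⟨-2,0⟩ : ℤ√5), (⟨-1,-1⟩ : ℤ√5)], ![(⟨2,0⟩ : ℤ√5), (⟨1,1⟩ : ℤ√5), (⟨1,-1⟩ : ℤ√5)]],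
    ![![(⟨-1,-1⟩ : ℤ√5), (⟨-1,1⟩ : ℤ√5), (⟨2,0⟩ : ℤ√5)], ![(⟨-1,1⟩ : ℤ√5), (⟨-2,0⟩ : ℤ√5), (⟨1,1⟩ : ℤ√5)], ![(⟨-2,0⟩ : ℤ√5), (⟨-1,-1⟩ : ℤ√5), (⟨1,-1⟩ : ℤ√5)]],
    ![![(⟨-1,-1⟩ : ℤ√5), (⟨-1,1⟩ : ℤ√5), (⟨2,0⟩ : ℤ√5)], ![(⟨1,-1⟩ : ℤ√5), (⟨2,0⟩ : ℤ√5), (⟨-1,-1⟩ : ℤ√5)], ![(⟨2,0⟩ : ℤ√5), (⟨1,1⟩ : ℤ√5), (⟨-1,1⟩ : ℤ√5)]],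
    ![![(⟨-4,0⟩ : ℤ√5), (⟨0,0⟩ : ℤ√5), (⟨0,0⟩ : ℤ√5)], ![(⟨0,0⟩ : ℤ√5), (⟨4,0⟩ : ℤ√5), (⟨0,0⟩ : ℤ√5)], ![(⟨0,0⟩ : ℤ√5), (⟨0,0⟩ : ℤ√5), (⟨4,0⟩ : ℤ√5)]],
    ![![(⟨-1,-1⟩ : ℤ√5), (⟨1,-1⟩ : ℤ√5), (⟨2,0⟩ : ℤ√5)], ![(⟨-1,1⟩ : ℤ√5), (⟨2,0⟩ : ℤ√5), (⟨1,1⟩ : ℤ√5)], ![(⟨2,0⟩ : ℤ√5), (⟨-1,-1⟩ : ℤ√5), (⟨-1,1⟩ : ℤ√5)]],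
    ![![(⟨-4,0⟩ : ℤ√5), (⟨0,0⟩ : ℤ√5), (⟨0,0⟩ : ℤ√5)], ![(⟨0,0⟩ : ℤ√5), (⟨-4,0⟩ : ℤ√5), (⟨0,0⟩ : ℤ√5)], ![(⟨0,0⟩ : ℤ√5), (⟨0,0⟩ : ℤ√5), (⟨4,0⟩ : ℤ√5)]],
    ![![(⟨-1,-1⟩ : ℤ√5), (⟨-1,1⟩ : ℤ√5), (⟨2,0⟩ : ℤ√5)], ![(⟨-1,1⟩ : ℤ√5), (⟨-2,0⟩ : ℤ√5), (⟨1,1⟩ : ℤ√5)], ![(⟨2,0⟩ : ℤ√5), (⟨1,1⟩ : ℤ√5), (⟨-1,1⟩ : ℤ√5)]],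
    ![![(⟨-4,0⟩ : ℤ√5), (⟨0,0⟩ : ℤ√5), (⟨0,0⟩ : ℤ√5)], ![(⟨0,0⟩ : ℤ√5), (⟨4,0⟩ : ℤ√5), (⟨0,0⟩ : ℤ√5)], ![(⟨0,0⟩ : ℤ√5), (⟨0,0⟩ : ℤ√5), (⟨-4,0⟩ : ℤ√5)]],
    ![![(⟨-4,0⟩ : ℤ√5), (⟨0,0⟩ : ℤ√5), (⟨0,0⟩ : ℤ√5)], ![(⟨0,0⟩ : ℤ√5), (⟨-4,0⟩ : ℤ√5), (⟨0,0⟩ : ℤ√5)], ![(⟨0,0⟩ : ℤ√5), (⟨0,0⟩ : ℤ√5), (⟨-4,0⟩ : ℤ√5)]]]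

def stepTbl : Fin 3 → Fin 120 → Fin 120 :=
  ![![1, 0, 6, 5, 9, 3, 2, 12, 14, 4, 16, 18, 7, 21, 8, 23, 10, 26, 11, 28, 30, 13, 32, 15, 35, 36, 17, 38, 19, 41, 20, 42, 22, 45, 46, 24, 25, 48, 27, 51, 52, 29, 31, 55, 56, 33, 34, 58, 37, 61, 62, 39, 40, 64, 66, 43, 44, 68, 47, 71, 72, 49, 50, 74, 53, 77, 54, 78, 57, 81, 82, 59, 60, 84, 63, 87, 88, 65, 67, 91, 92, 69, 70, 94, 73, 96, 97, 75, 76, 99, 100, 79, 80, 102, 83, 104, 85, 86, 106, 89, 90, 108, 93, 109, 95, 111, 98, 112, 101, 103, 115, 105, 107, 117, 116, 110, 114, 113, 119, 118],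
    ![2, 4, 0, 8, 1, 11, 9, 13, 3, 6, 17, 5, 20, 7, 18, 24, 25, 10, 14, 29, 12, 30, 33, 34, 15, 16, 36, 39, 40, 19, 21, 43, 44, 22, 23, 46, 26, 49, 50, 27, 28, 52, 54, 31, 32, 56, 35, 59, 60, 37, 38, 62, 41, 65, 42, 66, 45, 69, 70, 47, 48, 72, 51, 75, 76, 53, 55, 79, 80, 57, 58, 82, 61, 85, 86, 63, 64, 88, 90, 67, 68, 92, 71, 93, 95, 73, 74, 97, 77, 98, 78, 100, 81, 83, 103, 84, 104, 87, 89, 107, 91, 105, 109, 94, 96, 101, 112, 99, 114, 102, 113, 116, 106, 110, 108, 118, 111, 119, 115, 117],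
    ![3, 5, 7, 0, 10, 1, 12, 2, 15, 16, 4, 19, 6, 22, 23, 8, 9, 27, 28, 11, 31, 32, 13, 14, 33, 37, 38, 17, 18, 39, 42, 20, 21, 24, 47, 45, 48, 25, 26, 29, 53, 51, 30, 49, 57, 35, 58, 34, 36, 43, 63, 41, 64, 40, 67, 61, 68, 44, 46, 65, 73, 55, 74, 50, 52, 59, 78, 54, 56, 79, 83, 77, 84, 60, 62, 85, 89, 71, 66, 69, 93, 91, 94, 70, 72, 75, 98, 96, 99, 76, 101, 81, 102, 80, 82, 105, 87, 106, 86, 88, 108, 90, 92, 110, 111, 95, 97, 113, 100, 115, 103, 104, 117, 107, 118, 109, 119, 112, 114, 116]]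

def parI : Fin 120 → Fin 3 :=
  ![0, 0, 1, 2, 1, 2, 0, 2, 1, 0, 2, 1, 2, 1, 0, 2, 2, 1, 0, 2, 1, 0, 2, 2, 1, 1, 0, 2, 2, 1, 0, 2, 2, 1, 1, 0, 0, 2, 2, 1, 1, 0, 2, 1, 1, 0, 0, 2, 2, 1, 1, 0, 0, 2, 1, 0, 0, 2, 2, 1, 1, 0, 0, 2, 2, 1, 0, 2, 2, 1, 1, 0, 0, 2, 2, 1, 1, 0, 2, 1, 1, 0, 0, 2, 2, 1, 1, 0, 0, 2, 1, 0, 0, 2, 2, 1, 0, 0, 2, 2, 0, 2, 2, 1, 0, 2, 2, 1, 2, 1, 2, 2, 1, 2, 1, 2, 1, 2, 2, 2]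

def parJ : Fin 120 → Fin 120 :=
  ![0, 0, 0, 0, 1, 1, 2, 2, 3, 4, 4, 5, 6, 7, 8, 8, 9, 10, 11, 11, 12, 13, 13, 14, 15, 16, 17, 17, 18, 19, 20, 20, 21, 22, 23, 24, 25, 25, 26, 27, 28, 29, 30, 31, 32, 33, 34, 34, 36, 37, 38, 39, 40, 40, 42, 43, 44, 44, 46, 47, 48, 49, 50, 50, 52, 53, 54, 54, 56, 57, 58, 59, 60, 60, 62, 63, 64, 65, 66, 67, 68, 69, 70, 70, 72, 73, 74, 75, 76, 76, 78, 79, 80, 80, 82, 84, 85, 86, 86, 88, 90, 90, 92, 94, 95, 95, 97, 99, 100, 102, 103, 104, 106, 107, 108, 109, 111, 112, 114, 116]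

def gIdx : Fin 3 → Fin 120 := ![1, 2, 3]

/-- The (4-scaled) matrices of the three simple reflections. -/
def gent : Fin 3 → Fin 3 → Fin 3 → ℤ√5 :=
  ![![![4, 0, 0], ![0, -4, 0], ![0, 0, 4]],
    ![![⟨1,1⟩, ⟨1,-1⟩, ⟨-2,0⟩], ![⟨1,-1⟩, ⟨2,0⟩, ⟨-1,-1⟩], ![⟨-2,0⟩, ⟨-1,-1⟩, ⟨1,-1⟩]],
    ![![4, 0, 0], ![0, 4, 0], ![0, 0, -4]]]

set_option maxRecDepth 100000 in
set_option maxHeartbeats 4000000 in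
theorem hstep' : ∀ (i : Fin 3) (k : Fin 120) (a b : Fin 3),
    ent (gIdx i) a 0 * ent k 0 b + ent (gIdx i) a 1 * ent k 1 b
      + ent (gIdx i) a 2 * ent k 2 b = 4 * ent (stepTbl i k) a b := by decide

set_option maxRecDepth 100000 in
set_option maxHeartbeats 4000000 in
theorem hinj' : ∀ k l : Fin 120, (∀ a b : Fin 3, ent k a b = ent l a b) → k = l := by decide

set_option maxRecDepth 100000 in
theorem hpar : ∀ k : Fin 120, k ≠ 0 →
    stepTbl (parI k) (parJ k) = k ∧ ((parJ k : ℕ) < (k : ℕ)) := by decide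

set_option maxRecDepth 100000 in
theorem hent0 : ∀ a b : Fin 3, ent 0 a b = if a = b then 4 else 0 := by decide

set_option maxRecDepth 100000 in
theorem hgent : ∀ (i a b : Fin 3), ent (gIdx i) a b = gent i a b := by decide

/-- The embedding of `ℤ√5` into `ℝ`. -/
def c : ℤ√5 →+* ℝ :=
  Zsqrtd.lift ⟨Real.sqrt 5, by
    rw [Real.mul_self_sqrt (by norm_num : (0:ℝ) ≤ 5)]; norm_num⟩

theorem hc_inj : Function.Injective c := by
  apply Zsqrtd.lift_injective
  intro n h
  have h2 : n * n = 5 := h.symm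
  have hb : n.natAbs * n.natAbs = 5 := by
    have := Int.natAbs_mul_self (a := n)
    omega
  have hm : n.natAbs ∣ 5 := Dvd.intro_left _ hb
  have hle := Nat.le_of_dvd (by norm_num) hm
  interval_cases h : n.natAbs <;> omega

theorem hc4 : c 4 = 4 := by
  rw [show (4 : ℤ√5) = ((4 : ℤ) : ℤ√5) by norm_cast, map_intCast]
  norm_num

/-- The 120 real matrices (entries are quarters of the `ℤ√5` data). -/
def ΦQ (k : Fin 120) : Matrix (Fin 3) (Fin 3) ℝ :=
  Matrix.of fun a b => c (ent k a b) / 4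

theorem hΦQ_inj : Function.Injective ΦQ := by
  intro k l h
  refine hinj' k l fun a b => hc_inj ?_
  have h2 := congrFun (congrFun h a) b
  simp only [ΦQ, Matrix.of_apply] at h2
  linarith

theorem hΦQ_mul (i : Fin 3) (k : Fin 120) :
    ΦQ (gIdx i) * ΦQ k = ΦQ (stepTbl i k) := by
  ext a b
  have h := congrArg c (hstep' i k a b)
  simp only [map_add, map_mul, hc4] at h
  simp only [ΦQ, Matrix.mul_apply, Fin.sum_univ_three, Matrix.of_apply]
  field_simp
  linarith

theorem hΦQ_one : ΦQ 0 = 1 := by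
  ext a b
  show c (ent 0 a b) / 4 = _
  rw [hent0, Matrix.one_apply]
  by_cases hab : a = b
  · simp [hab, hc4]
  · simp [hab]

abbrev E := EuclideanSpace ℝ (Fin 3)

/-- Transport to plain functions. -/
def L : E ≃ₗ[ℝ] (Fin 3 → ℝ) := WithLp.linearEquiv 2 ℝ (Fin 3 → ℝ)

/-- Matrix of a linear isometry equivalence of `ℝ³`, as a monoid hom. -/
def ψ : (E ≃ₗᵢ[ℝ] E) →* Matrix (Fin 3) (Fin 3) ℝ where
  toFun f := LinearMap.toMatrix' ((L.toLinearMap.comp f.toLinearEquiv.toLinearMap).comp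
      L.symm.toLinearMap)
  map_one' := by
    show LinearMap.toMatrix' _ = 1
    have h : ((L.toLinearMap.comp (1 : E ≃ₗᵢ[ℝ] E).toLinearEquiv.toLinearMap).comp
        L.symm.toLinearMap) = LinearMap.id := by ext v; simp
    rw [h, LinearMap.toMatrix'_id]
  map_mul' f g := by
    show LinearMap.toMatrix' _ = LinearMap.toMatrix' _ * LinearMap.toMatrix' _
    rw [← LinearMap.toMatrix'_comp]
    congr 1

theorem hψ_inj : Function.Injective ψ := by
  intro f g h
  have h2 := LinearMap.toMatrix'.injective h
  refine LinearIsometryEquiv.ext fun v => ?_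
  have h3 := congrArg (fun (M : (Fin 3 → ℝ) →ₗ[ℝ] Fin 3 → ℝ) => L.symm (M (L v))) h2
  simpa using h3

theorem hψ_apply (f : E ≃ₗᵢ[ℝ] E) (a b : Fin 3) :
    ψ f a b = f (EuclideanSpace.single b 1) a := by
  show LinearMap.toMatrix' _ a b = _
  rw [LinearMap.toMatrix'_apply]
  have h1 : (fun j => if j = b then (1:ℝ) else 0) = Pi.single b 1 := by
    funext j; simp [Pi.single_apply]
  simp only [LinearMap.comp_apply, h1]
  rfl

/-- The simple reflections as isometries. -/
def refl3 (i : Fin 3) : E ≃ₗᵢ[ℝ] E := Submodule.reflection (ℝ ∙ (r i))ᗮ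

theorem sqrt5_sq : Real.sqrt 5 * Real.sqrt 5 = 5 :=
  Real.mul_self_sqrt (by norm_num)

theorem hr_unit (i : Fin 3) : ⟪r i, r i⟫ = 1 := by
  fin_cases i <;>
    · simp only [r, PiLp.inner_apply, RCLike.inner_apply, starRingEnd_apply, Fin.sum_univ_three]
      norm_num [τ, Matrix.cons_val_zero, Matrix.cons_val_one, Matrix.head_cons,
        Matrix.cons_val_two, Matrix.vecTail, Matrix.vecHead]
      try nlinarith [sqrt5_sq]

theorem hrefl3_apply (i : Fin 3) (v : E) :
    refl3 i v = v - (2 * ⟪v, r i⟫ / ⟪r i, r i⟫) • r i := by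
  have hsq : ‖r i‖ ^ 2 = (1:ℝ) := by rw [← real_inner_self_eq_norm_sq, hr_unit]
  rw [hr_unit, refl3, Submodule.reflection_orthogonal_apply, Submodule.reflection_singleton_apply,
      real_inner_comm (r i) v]
  simp only [RCLike.ofReal_real_eq_id, id, hsq]
  norm_num
  module

theorem hrefl3_mem (i : Fin 3) : refl3 i ∈ IcosGroup :=
  Subgroup.subset_closure ⟨i, fun v => hrefl3_apply i v⟩

theorem hgen_eq {f : E ≃ₗᵢ[ℝ] E}
    (hf : f ∈ {f : E ≃ₗᵢ[ℝ] E | ∃ i : Fin 3, ∀ v, f v = v - (2 * ⟪v, r i⟫ / ⟪r i, r i⟫) • r i}) :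
    ∃ i : Fin 3, f = refl3 i := by
  obtain ⟨i, hi⟩ := hf
  exact ⟨i, LinearIsometryEquiv.ext fun v => by rw [hi v, hrefl3_apply]⟩

theorem hrefl3_inv (i : Fin 3) : (refl3 i)⁻¹ = refl3 i := Submodule.reflection_inv

/-- Matrices of the simple reflections. -/
theorem hψ_refl3 (i : Fin 3) : ψ (refl3 i) = ΦQ (gIdx i) := by
  ext a b
  rw [hψ_apply, hrefl3_apply, hr_unit]
  have hib : ⟪EuclideanSpace.single b (1:ℝ), r i⟫ = r i b := by
    rw [real_inner_comm]
    simp [EuclideanSpace.inner_single_right]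
  rw [hib]
  show (EuclideanSpace.single b (1:ℝ) - (2 * r i b / 1) • r i) a = c (ent (gIdx i) a b) / 4
  rw [hgent]
  fin_cases i <;> fin_cases a <;> fin_cases b <;>
    · simp only [gent, r, PiLp.sub_apply, PiLp.smul_apply, EuclideanSpace.single_apply,
        Matrix.cons_val_zero, Matrix.cons_val_one, Matrix.head_cons, Matrix.cons_val_two,
        Matrix.vecTail, Matrix.vecHead, smul_eq_mul, c, Zsqrtd.lift_apply_apply, Fin.isValue]
      norm_num [τ, Fin.ext_iff]
      try nlinarith [sqrt5_sq]

theorem mem_to_range {f : E ≃ₗᵢ[ℝ] E} (hf : f ∈ IcosGroup) : ∃ k, ψ f = ΦQ k := by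
  unfold IcosGroup at hf
  induction hf using Subgroup.closure_induction_left with
  | one => exact ⟨0, by rw [map_one, hΦQ_one]⟩
  | mul_left x hx y hy ih =>
    obtain ⟨i, rfl⟩ := hgen_eq hx
    obtain ⟨k, hk⟩ := ih
    exact ⟨stepTbl i k, by rw [map_mul, hψ_refl3, hk, hΦQ_mul]⟩
  | inv_mul_cancel x hx y hy ih =>
    obtain ⟨i, rfl⟩ := hgen_eq hx
    obtain ⟨k, hk⟩ := ih
    rw [hrefl3_inv]
    exact ⟨stepTbl i k, by rw [map_mul, hψ_refl3, hk, hΦQ_mul]⟩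

theorem range_to_mem : ∀ k : Fin 120, ∃ f ∈ IcosGroup, ψ f = ΦQ k := by
  have key : ∀ n : ℕ, ∀ k : Fin 120, (k : ℕ) = n → ∃ f ∈ IcosGroup, ψ f = ΦQ k := by
    intro n
    induction n using Nat.strong_induction_on with
    | _ n ih =>
      intro k hk
      by_cases h0 : k = 0
      · exact ⟨1, one_mem _, by rw [map_one, h0, hΦQ_one]⟩
      · obtain ⟨hs, hlt⟩ := hpar k h0
        obtain ⟨f, hf, hψf⟩ := ih (parJ k) (hk ▸ hlt) (parJ k) rfl
        exact ⟨refl3 (parI k) * f, mul_mem (hrefl3_mem _) hf,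
          by rw [map_mul, hψ_refl3, hψf, hΦQ_mul, hs]⟩
  exact fun k => key (k : ℕ) k rfl

theorem himage : ψ '' (IcosGroup : Set (E ≃ₗᵢ[ℝ] E)) = Set.range ΦQ := by
  ext m
  constructor
  · rintro ⟨f, hf, rfl⟩
    obtain ⟨k, hk⟩ := mem_to_range hf
    exact ⟨k, hk.symm⟩
  · rintro ⟨k, rfl⟩
    obtain ⟨f, hf, hψf⟩ := range_to_mem k
    exact ⟨f, hf, hψf⟩

end IcosAux

/-- The group generated by the three simple reflections of `H₃` has order 120
(it is the full icosahedral group, the Coxeter group `H₃ ≅ A₅ × ℤ₂`). -/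
theorem card_icosahedral_reflection_group : Nat.card IcosGroup = 120 := by
  have h1 : Nat.card IcosGroup
      = Nat.card (IcosAux.ψ '' (IcosGroup : Set (IcosAux.E ≃ₗᵢ[ℝ] IcosAux.E))) := by
    rw [Nat.card_image_of_injective IcosAux.hψ_inj]
    rfl
  rw [h1, IcosAux.himage, Nat.card_range_of_injective IcosAux.hΦQ_inj]
  simp
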